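/- arXiv:2001.01782 — 3 statements merged into one kernel-verified Lean document; each statement's English description precedes it below -/
import Mathlib

section
/- Fix real numbers p > 1 and l > 1 and define f : [0,∞) → ℝ by f(s) = s^l for 0 ≤ s ≤ 1 and f(s) = s^{p−1}·ln(s) + 1 for s > 1; set F(s) = ∫₀^s f(t) dt. Then f does not satisfy the Ambrosetti–Rabinowitz condition: for every β > p and every M > 0 there exists s ≥ M such that β·F(s) > f(s)·s. -/
open Real Set

lemma aux_int (p : ℝ) (hp : 1 < p) (s : ℝ) (hs : 1 ≤ s) :
    ∫ t in (1:ℝ)..s, (t ^ (p-1) * Real.log t + 1) =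
      (s ^ p * Real.log s / p - s ^ p / p^2 + s) - (1 - 1/p^2) := by
  have hp0 : (0:ℝ) < p := by linarith
  have key : ∫ t in (1:ℝ)..s, (t ^ (p-1) * Real.log t + 1) =
      (fun t => t ^ p * Real.log t / p - t ^ p / p^2 + t) s -
      (fun t => t ^ p * Real.log t / p - t ^ p / p^2 + t) 1 := by
    apply intervalIntegral.integral_eq_sub_of_hasDerivAt
    · intro t ht
      rw [uIcc_of_le hs] at ht
      have ht1 : (1:ℝ) ≤ t := ht.1
      have ht0 : (0:ℝ) < t := by linarith
      have h1 : HasDerivAt (fun t : ℝ => t ^ p) (p * t ^ (p-1)) t :=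
        Real.hasDerivAt_rpow_const (Or.inl (ne_of_gt ht0))
      have h2 : HasDerivAt Real.log t⁻¹ t := Real.hasDerivAt_log (ne_of_gt ht0)
      have h3 : HasDerivAt (fun t : ℝ => t ^ p * Real.log t)
          (p * t ^ (p-1) * Real.log t + t ^ p * t⁻¹) t := h1.mul h2
      have h4 : t ^ p * t⁻¹ = t ^ (p-1) := by
        rw [Real.rpow_sub ht0, Real.rpow_one]; ring
      rw [h4] at h3
      have h5 : HasDerivAt (fun t : ℝ => t ^ p * Real.log t / p - t ^ p / p^2 + t)
          ((p * t ^ (p-1) * Real.log t + t ^ (p-1)) / p - (p * t ^ (p-1)) / p^2 + 1) t :=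
        ((h3.div_const p).sub (h1.div_const (p^2))).add (hasDerivAt_id t)
      convert h5 using 1
      · rfl
      · rfl
      field_simp
      ring
    · apply ContinuousOn.intervalIntegrable
      apply ContinuousOn.add
      · apply ContinuousOn.mul
        · intro t ht
          rw [uIcc_of_le hs] at ht
          exact ((Real.continuousAt_rpow_const t (p-1)
            (Or.inl (by intro h; rw [h] at ht; linarith [ht.1]))).continuousWithinAt)
        · intro t ht
          rw [uIcc_of_le hs] at ht
          exact (Real.continuousAt_log (by intro h; rw [h] at ht; linarith [ht.1])).continuousWithinAt
      · exact continuousOn_const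
  simp only at key
  rw [key]
  simp [Real.one_rpow, Real.log_one]
  ring

set_option maxHeartbeats 1000000 in
/-- The model nonlinearity `f₂(s) = s^l` for `0 ≤ s ≤ 1`,
`f₂(s) = s^(p-1) * log s + 1` for `s > 1`, does not satisfy the
Ambrosetti–Rabinowitz condition: for every `β > p` and `M > 0` there is
`s ≥ M` with `β * F s > f s * s`. -/
theorem statement2 (p l : ℝ) (hp : 1 < p) (hl : 1 < l)
    (f F : ℝ → ℝ)
    (hf : ∀ s, 0 ≤ s → f s = if s ≤ 1 then s ^ l else s ^ (p - 1) * Real.log s + 1)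
    (hF : ∀ s, F s = ∫ t in (0:ℝ)..s, f t) :
    ∀ β, p < β → ∀ M, 0 < M → ∃ s, M ≤ s ∧ β * F s > f s * s := by
  intro β hβ M hM
  have hp0 : (0:ℝ) < p := by linarith
  have hβ0 : (0:ℝ) < β := by linarith
  have hβp : 0 < β - p := by linarith
  set C : ℝ := β * (1 + p^2) / (p * (β - p)) with hCdef
  have hden : 0 < p * (β - p) := mul_pos hp0 hβp
  have hC : C * (p * (β - p)) = β * (1 + p^2) := div_mul_cancel₀ _ (ne_of_gt hden)
  have hCpos : 0 < C := div_pos (by positivity) hden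
  set s : ℝ := max M (Real.exp (C + 1)) with hsdef
  have hsM : M ≤ s := le_max_left _ _
  have hse : Real.exp (C + 1) ≤ s := le_max_right _ _
  have hs1 : 1 < s := lt_of_lt_of_le (by
    have : Real.exp 0 < Real.exp (C + 1) := Real.exp_lt_exp.2 (by linarith)
    simpa using this) hse
  have hs0 : (0:ℝ) < s := by linarith
  have hs1' : (1:ℝ) ≤ s := le_of_lt hs1
  -- log bound
  have hL : C + 1 ≤ Real.log s := by
    have := Real.log_le_log (Real.exp_pos _) hse
    rwa [Real.log_exp] at this
  set L : ℝ := Real.log s with hLdef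
  set X : ℝ := s ^ p with hXdef
  have hX : (1:ℝ) ≤ X := Real.one_le_rpow hs1' (le_of_lt hp0)
  -- f on [1,s]
  have heq1 : EqOn f (fun t => t ^ (p-1) * Real.log t + 1) (uIcc (1:ℝ) s) := by
    intro t ht
    rw [uIcc_of_le hs1'] at ht
    rw [hf t (by linarith [ht.1])]
    split_ifs with h
    · have : t = 1 := le_antisymm h ht.1
      subst this; simp
    · rfl
  -- f on [0,1]
  have heq0 : EqOn f (fun t => t ^ l) (uIcc (0:ℝ) 1) := by
    intro t ht
    rw [uIcc_of_le zero_le_one] at ht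
    rw [hf t ht.1, if_pos ht.2]
  have hcont0 : ContinuousOn (fun t : ℝ => t ^ l) (uIcc (0:ℝ) 1) := by
    intro t _
    exact (Real.continuousAt_rpow_const t l (Or.inr (by linarith))).continuousWithinAt
  have hcont1 : ContinuousOn (fun t : ℝ => t ^ (p-1) * Real.log t + 1) (uIcc (1:ℝ) s) := by
    apply ContinuousOn.add
    · apply ContinuousOn.mul
      · intro t ht
        rw [uIcc_of_le hs1'] at ht
        exact (Real.continuousAt_rpow_const t (p-1)
          (Or.inl (by intro h; rw [h] at ht; linarith [ht.1]))).continuousWithinAt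
      · intro t ht
        rw [uIcc_of_le hs1'] at ht
        exact (Real.continuousAt_log (by intro h; rw [h] at ht; linarith [ht.1])).continuousWithinAt
    · exact continuousOn_const
  have hint0 : IntervalIntegrable f MeasureTheory.volume 0 1 :=
    (hcont0.congr heq0).intervalIntegrable
  have hint1 : IntervalIntegrable f MeasureTheory.volume 1 s :=
    (hcont1.congr heq1).intervalIntegrable
  have hsplit : ∫ t in (0:ℝ)..s, f t = (∫ t in (0:ℝ)..1, f t) + ∫ t in (1:ℝ)..s, f t :=
    (intervalIntegral.integral_add_adjacent_intervals hint0 hint1).symm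
  have hA : 0 ≤ ∫ t in (0:ℝ)..1, f t := by
    apply intervalIntegral.integral_nonneg zero_le_one
    intro u hu
    rw [hf u hu.1, if_pos hu.2]
    exact Real.rpow_nonneg hu.1 l
  have hI1 : ∫ t in (1:ℝ)..s, f t = (X * L / p - X / p^2 + s) - (1 - 1/p^2) := by
    rw [intervalIntegral.integral_congr heq1]
    exact aux_int p hp s hs1'
  have hFs : F s = (∫ t in (0:ℝ)..1, f t) + ((X * L / p - X / p^2 + s) - (1 - 1/p^2)) := by
    rw [hF, hsplit, hI1]
  have hfs : f s * s = X * L + s := by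
    rw [hf s (le_of_lt hs0), if_neg (not_le.2 hs1)]
    have h4 : s ^ (p-1) * s = s ^ p := by
      rw [← Real.rpow_add_one (ne_of_gt hs0)]; ring_nf
    rw [hXdef, hLdef, add_mul, one_mul, mul_right_comm, h4]
  clear_value X L s C
  refine ⟨s, hsM, ?_⟩
  rw [hFs, hfs]
  have hAβ : 0 ≤ β * (∫ t in (0:ℝ)..1, f t) := mul_nonneg (le_of_lt hβ0) hA
  have hQ : 0 < β * (X*L*p - X + (s-1)*p^2 + 1) - p^2*X*L - p^2*s := by
    have hX0 : (0:ℝ) < X := by linarith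
    have e1 : X*(C+1)*(p*(β-p)) ≤ X*L*(p*(β-p)) := by
      have h1 : 0 ≤ (L - (C+1)) * (X * (p*(β-p))) :=
        mul_nonneg (by linarith) (by positivity)
      nlinarith [h1]
    have e2 : X*(C+1)*(p*(β-p)) = X*(β*(1+p^2)) + X*(p*(β-p)) := by
      have : X*(C+1)*(p*(β-p)) = X*(C*(p*(β-p))) + X*(p*(β-p)) := by ring
      rw [this, hC]
    have f1 : X*(β*(1+p^2)) + X*(p*(β-p)) ≤ X*L*(p*(β-p)) := e2 ▸ e1
    have g1 : 0 ≤ (X-1) * (β*p^2) := mul_nonneg (by linarith) (by positivity)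
    have g2 : 0 ≤ X*(p*(β-p)) := le_of_lt (mul_pos hX0 hden)
    have g3 : 0 ≤ s*(p^2*(β-1)) := mul_nonneg (le_of_lt hs0) (by nlinarith)
    linarith [f1, g1, g2, g3, hβ0]
  have hEq : β * ((X * L / p - X / p^2 + s) - (1 - 1/p^2)) - (X*L + s)
      = (β * (X*L*p - X + (s-1)*p^2 + 1) - p^2*X*L - p^2*s) / p^2 := by
    field_simp
    ring
  have hkey : X*L + s < β * ((X * L / p - X / p^2 + s) - (1 - 1/p^2)) := by
    rw [← sub_pos, hEq]
    exact div_pos hQ (by positivity)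
  calc X*L + s < β * ((X * L / p - X / p^2 + s) - (1 - 1/p^2)) := hkey
    _ ≤ β * ((∫ t in (0:ℝ)..1, f t) + ((X * L / p - X / p^2 + s) - (1 - 1/p^2))) := by
        nlinarith [hAβ]
end

section
/- Let p > 1, μ > 0 and c₂ > 0 be real numbers, let f : [0,∞) → ℝ be continuous with f(s) ≥ 0 for all s ≥ 0, and set F(s) = ∫₀^s f(t) dt. Assume lim_{s→+∞} F(s)/s^p = +∞ and liminf_{s→+∞} (f(s)·s − p·F(s))/s^μ ≥ c₂. Then lim_{s→+∞} f(s)/s^{p−1} = +∞, i.e. f is (p−1)-superlinear at +∞. -/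
open Real Set Filter

/-- If `f ≥ 0` is continuous on `[0,∞)` with primitive `F`,
`F(s)/s^p → +∞` and `liminf_{s→+∞} (f(s)·s − p·F(s))/s^μ ≥ c₂ > 0`, then
`f(s)/s^(p−1) → +∞`, i.e. `f` is `(p−1)`-superlinear at `+∞`. -/
theorem statement5 (p μ c₂ : ℝ) (hp : 1 < p) (hμ : 0 < μ) (hc₂ : 0 < c₂)
    (f F : ℝ → ℝ) (hf : ContinuousOn f (Set.Ici 0))
    (hfpos : ∀ s, 0 ≤ s → 0 ≤ f s)
    (hF : ∀ s, F s = ∫ t in (0:ℝ)..s, f t)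
    (hii : Filter.Tendsto (fun s : ℝ => F s / s ^ p) Filter.atTop Filter.atTop)
    (hiii : c₂ ≤ Filter.liminf (fun s : ℝ => (f s * s - p * F s) / s ^ μ)
      Filter.atTop) :
    Filter.Tendsto (fun s : ℝ => f s / s ^ (p - 1)) Filter.atTop Filter.atTop := by
  set u : ℝ → ℝ := fun s => (f s * s - p * F s) / s ^ μ with hu
  set S : Set ℝ := {a | ∀ᶠ s in atTop, a ≤ u s} with hS
  have hliminf : Filter.liminf u Filter.atTop = sSup S := Filter.liminf_eq
  -- get a positive element of S
  have hex : ∃ a ∈ S, 0 < a := by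
    by_contra h
    push_neg at h
    rcases Set.eq_empty_or_nonempty S with he | hne
    · rw [hliminf, he, Real.sSup_empty] at hiii
      linarith
    · have hbdd : BddAbove S := ⟨0, fun a ha => h a ha⟩
      have : sSup S ≤ 0 := csSup_le hne (fun a ha => h a ha)
      rw [hliminf] at hiii
      linarith
  obtain ⟨a, ha, hapos⟩ := hex
  have hkey : ∀ᶠ s in atTop, p * (F s / s ^ p) ≤ f s / s ^ (p - 1) := by
    filter_upwards [ha, Filter.eventually_ge_atTop (1 : ℝ)] with s hs hs1
    have hspos : (0 : ℝ) < s := by linarith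
    have hsmu : (0 : ℝ) < s ^ μ := Real.rpow_pos_of_pos hspos μ
    have h1 : 0 ≤ f s * s - p * F s := by
      have := (div_nonneg_iff.mp (le_trans hapos.le hs)).resolve_right ?_
      · exact this.1
      · rintro ⟨-, h2⟩; linarith
    have hsp : (0 : ℝ) < s ^ p := Real.rpow_pos_of_pos hspos p
    have hpow : s ^ (p - 1) = s ^ p / s := by
      rw [Real.rpow_sub hspos, Real.rpow_one]
    rw [hpow, div_div_eq_mul_div, ← mul_div_assoc]
    have hle : p * F s ≤ f s * s := by linarith
    gcongr
  exact tendsto_atTop_mono' _ hkey (hii.const_mul_atTop (by linarith))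
end

section
/- Let 1 < τ < p and a₀ > 0 be real numbers and let f : [0,∞) → ℝ be continuous with f(s) ≥ 0 for all s ≥ 0 and lim_{s→+∞} f(s)/s^{p−1} = +∞. Then there exists λ̃ > 0 such that λ̃·a₀·s^{τ−1} + f(s) ≥ s^{p−1} for all s ≥ 0. -/
open Real Set Filter

/-- If `f ≥ 0` is continuous on `[0,∞)` and
`(p−1)`-superlinear at `+∞`, and `1 < τ < p`, `a₀ > 0`, then there is
`λ̃ > 0` with `λ̃·a₀·s^(τ−1) + f(s) ≥ s^(p−1)` for all `s ≥ 0`. -/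
theorem statement12 (τ p a₀ : ℝ) (hτ : 1 < τ) (hτp : τ < p) (ha₀ : 0 < a₀)
    (f : ℝ → ℝ) (hf : ContinuousOn f (Set.Ici 0))
    (hfpos : ∀ s, 0 ≤ s → 0 ≤ f s)
    (hsup : Filter.Tendsto (fun s : ℝ => f s / s ^ (p - 1)) Filter.atTop
      Filter.atTop) :
    ∃ lam > 0, ∀ s, 0 ≤ s → s ^ (p - 1) ≤ lam * a₀ * s ^ (τ - 1) + f s := by
  obtain ⟨M, hM⟩ := Filter.eventually_atTop.mp (hsup.eventually_ge_atTop 1)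
  set S : ℝ := max M 1 with hS
  have hS1 : (1 : ℝ) ≤ S := le_max_right _ _
  have hS0 : (0 : ℝ) < S := lt_of_lt_of_le one_pos hS1
  have hpτ : 0 < p - τ := by linarith
  have hlam : 0 < S ^ (p - τ) / a₀ := div_pos (Real.rpow_pos_of_pos hS0 _) ha₀
  refine ⟨S ^ (p - τ) / a₀, hlam, fun s hs => ?_⟩
  rcases eq_or_lt_of_le hs with h0 | hspos
  · rw [← h0, Real.zero_rpow (by linarith : p - 1 ≠ 0)]
    have := hfpos 0 le_rfl
    positivity
  rcases le_or_gt s S with hsS | hSs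
  · have key : s ^ (p - 1) ≤ S ^ (p - τ) / a₀ * a₀ * s ^ (τ - 1) := by
      rw [div_mul_cancel₀ _ (ne_of_gt ha₀)]
      calc s ^ (p - 1) = s ^ (p - τ) * s ^ (τ - 1) := by
            rw [← Real.rpow_add hspos]; ring_nf
        _ ≤ S ^ (p - τ) * s ^ (τ - 1) := by
            exact mul_le_mul_of_nonneg_right (Real.rpow_le_rpow hs hsS hpτ.le)
              (Real.rpow_nonneg hs _)
    have := hfpos s hs
    linarith
  · have hsM : M ≤ s := le_trans (le_max_left _ _) (le_of_lt hSs)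
    have h1 : 1 ≤ f s / s ^ (p - 1) := hM s hsM
    have hsp : 0 < s ^ (p - 1) := Real.rpow_pos_of_pos hspos _
    have hfs : s ^ (p - 1) ≤ f s := by
      have := (one_le_div hsp).mp h1
      linarith
    have : 0 ≤ S ^ (p - τ) / a₀ * a₀ * s ^ (τ - 1) := by positivity
    linarith
end
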